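/- Let G be a countable group containing a subgroup F_2 ≤ G that is a free group on two generators, and let G ↷ X be a free action by homeomorphisms on a compact metrizable space. Suppose that for every finite D ⊂ F_2 there exist open sets V_1, V_2, V_3 ⊂ X and elements g_1, g_2, g_3 ∈ G such that the sets g·cl(V_i), for g ∈ D and i ∈ {1,2,3}, are pairwise disjoint, and g_1V_1 ∪ g_2V_2 ∪ g_3V_3 = X. Then there exists a G-equivariant topological embedding of X into [0,1]^G equipped with the left shift action. -/

import Mathlib

open Set Pointwise Topology Metric Filter

private lemma continuous_finset_sup'_aux {X ι : Type*} [TopologicalSpace X] (s : Finset ι)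
    (hs : s.Nonempty) (f : ι → X → ℝ) (hf : ∀ i, Continuous (f i)) :
    Continuous fun x => s.sup' hs fun i => f i x := by
  induction hs using Finset.Nonempty.cons_induction with
  | singleton a =>
    have he : (fun x => ({a} : Finset ι).sup' (Finset.singleton_nonempty a) fun i => f i x)
        = f a := by
      funext x
      rw [Finset.sup'_singleton]
    rw [he]; exact hf a
  | cons a s ha hs ih =>
    have he : (fun x => (Finset.cons a s ha).sup' (Finset.cons_nonempty ha) fun i => f i x)
        = fun x => max (f a x) (s.sup' hs fun i => f i x) := by
      funext x
      rw [Finset.sup'_cons hs]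
    rw [he]; exact (hf a).max ih

set_option maxHeartbeats 3000000

/-- Let `G` be a countable group containing a free subgroup on two
generators (realized as the range of an injective homomorphism `φ` from the free group on
two generators), and let `G ↷ X` be a free action on a compact metrizable space. Suppose
that for every finite `D` contained in this free subgroup there are open sets
`V 0, V 1, V 2` and elements `c 0, c 1, c 2 ∈ G` such that the translates `g • closure (V i)`,
`g ∈ D`, `i ∈ {0, 1, 2}`, are pairwise disjoint while `⋃ i, c i • V i = X`. Then `X` embeds
`G`-equivariantly into `[0, 1]^G` with the left shift action. -/
theorem embedding_into_shift_of_paradoxical_covers {G X : Type*} [Group G] [Countable G]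
    [Infinite G] [TopologicalSpace X] [CompactSpace X] [TopologicalSpace.MetrizableSpace X]
    [MulAction G X] [ContinuousConstSMul G X]
    (hfree : ∀ (g : G) (x : X), g • x = x → g = 1)
    (φ : FreeGroup (Fin 2) →* G) (hφ : Function.Injective φ)
    (hcov : ∀ D : Finset G, (D : Set G) ⊆ Set.range φ →
      ∃ (V : Fin 3 → Set X) (c : Fin 3 → G),
        (∀ i, IsOpen (V i)) ∧
        (∀ g ∈ D, ∀ g' ∈ D, ∀ i i' : Fin 3, (g, i) ≠ (g', i') →
          Disjoint (g • closure (V i)) (g' • closure (V i'))) ∧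
        (⋃ i, c i • V i) = Set.univ) :
    ∃ f : X → G → ℝ,
      (∀ x g, f x g ∈ Set.Icc (0 : ℝ) 1) ∧
      Topology.IsEmbedding f ∧
      ∀ (g : G) (x : X), f (g • x) = fun h => f x (g⁻¹ * h) := by
  classical
  letI : MetricSpace X := TopologicalSpace.metrizableSpaceMetric X
  rcases isEmpty_or_nonempty X with hX | hX
  · refine ⟨fun _ _ => 0, fun x => isEmptyElim x, ?_, fun g x => isEmptyElim x⟩
    have hc : Continuous (fun _ : X => fun _ : G => (0 : ℝ)) := continuous_const
    have hinj : Function.Injective (fun _ : X => fun _ : G => (0 : ℝ)) :=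
      fun a => isEmptyElim a
    exact (hc.isClosedEmbedding hinj).isEmbedding
  haveI : TopologicalSpace.SeparableSpace X :=
    TopologicalSpace.isSeparable_univ_iff.mp isCompact_univ.isSeparable
  -- a separating family of continuous functions with values in [0,1]
  obtain ⟨fm, hfmc, hfm0, hfm1, hfmsep⟩ :
      ∃ fm : ℕ → X → ℝ, (∀ m, Continuous (fm m)) ∧ (∀ m x, 0 ≤ fm m x) ∧
        (∀ m x, fm m x ≤ 1) ∧ ∀ x y : X, (∀ m, fm m x = fm m y) → x = y := by
    refine ⟨fun m x => min (dist x (TopologicalSpace.denseSeq X m)) 1,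
      fun m => (continuous_id.dist continuous_const).min continuous_const,
      fun m x => le_min dist_nonneg zero_le_one, fun m x => min_le_right _ _, ?_⟩
    intro x y hxy
    by_contra hne
    have hr : 0 < dist x y := dist_pos.mpr hne
    have hεpos : 0 < min 1 (dist x y) / 4 := by positivity
    obtain ⟨m, hm⟩ := (TopologicalSpace.denseRange_denseSeq X).exists_dist_lt x hεpos
    have hmin1 : min 1 (dist x y) ≤ 1 := min_le_left _ _
    have hmin2 : min 1 (dist x y) ≤ dist x y := min_le_right _ _
    have h2 : min (dist x (TopologicalSpace.denseSeq X m)) 1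
        = min (dist y (TopologicalSpace.denseSeq X m)) 1 := hxy m
    have h1 : min (dist x (TopologicalSpace.denseSeq X m)) 1
        = dist x (TopologicalSpace.denseSeq X m) := min_eq_left (by linarith)
    rw [h1] at h2
    have hb : dist y (TopologicalSpace.denseSeq X m) = dist x (TopologicalSpace.denseSeq X m) := by
      rcases le_or_gt (dist y (TopologicalSpace.denseSeq X m)) 1 with h | h
      · rw [min_eq_left h] at h2; exact h2.symm
      · rw [min_eq_right h.le] at h2; linarith
    have htri := dist_triangle x (TopologicalSpace.denseSeq X m) y
    rw [dist_comm (TopologicalSpace.denseSeq X m) y] at htri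
    linarith
  -- seven distinct elements of the free subgroup
  set gq : Fin 7 → G := fun p => φ (FreeGroup.of (0 : Fin 2) ^ (p : ℕ)) with hgq_def
  have hgqne : ∀ p q : Fin 7, p ≠ q → gq p ≠ gq q := by
    intro p q hpq h
    apply hpq
    have h2 := hφ h
    have h3 := congrArg (FreeGroup.lift fun _ : Fin 2 => Multiplicative.ofAdd (1 : ℤ)) h2
    simp only [map_pow, FreeGroup.lift_apply_of] at h3
    have h4 : ((Multiplicative.ofAdd (1 : ℤ)) ^ (p : ℕ)).toAdd
        = ((Multiplicative.ofAdd (1 : ℤ)) ^ (q : ℕ)).toAdd := by rw [h3]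
    simp only [toAdd_pow, toAdd_ofAdd, nsmul_eq_mul, mul_one] at h4
    exact Fin.ext (by exact_mod_cast h4)
  set D : Finset G := Finset.image gq Finset.univ with hD_def
  have hDsub : (D : Set G) ⊆ Set.range φ := by
    intro g hg
    simp only [hD_def, Finset.coe_image, Set.mem_image] at hg
    obtain ⟨p, _, rfl⟩ := hg
    exact ⟨_, rfl⟩
  have hgmem : ∀ p, gq p ∈ D := fun p => Finset.mem_image_of_mem _ (Finset.mem_univ p)
  obtain ⟨V, c, _hVo, hdis, hcover⟩ := hcov D hDsub
  set M : Set X := ⋃ i, closure (V i) with hM_def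
  have hMclosed : IsClosed M := isClosed_iUnion_of_finite fun i => isClosed_closure
  have hcov_pt : ∀ w : X, ∃ i : Fin 3, (c i)⁻¹ • w ∈ M := by
    intro w
    have hw : w ∈ ⋃ i, c i • V i := by rw [hcover]; exact Set.mem_univ w
    obtain ⟨i, hi⟩ := Set.mem_iUnion.mp hw
    exact ⟨i, Set.mem_iUnion.mpr ⟨i, subset_closure (Set.mem_smul_set_iff_inv_smul_mem.mp hi)⟩⟩
  have hMne : M.Nonempty := by
    obtain ⟨x0⟩ := hX
    obtain ⟨i, hi⟩ := hcov_pt x0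
    exact ⟨_, hi⟩
  set S : Fin 7 → Set X := fun p => gq p • M with hS_def
  have hScomp : ∀ p, IsCompact (S p) := by
    intro p
    show IsCompact (gq p • M)
    rw [← Set.image_smul]
    exact (hMclosed.isCompact).image (continuous_const_smul _)
  have hSclosed : ∀ p, IsClosed (S p) := fun p => (hScomp p).isClosed
  have hSne : ∀ p, (S p).Nonempty := fun p => hMne.smul_set
  have hS0 : S 0 = M := by
    show gq 0 • M = M
    have h1 : gq 0 = 1 := by simp [hgq_def]
    rw [h1, one_smul]
  have hSdisj : ∀ p q : Fin 7, p ≠ q → Disjoint (S p) (S q) := by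
    intro p q hpq
    show Disjoint (gq p • M) (gq q • M)
    rw [hM_def, Set.smul_set_iUnion, Set.smul_set_iUnion]
    refine Set.disjoint_iUnion_left.mpr fun i => Set.disjoint_iUnion_right.mpr fun i' => ?_
    refine hdis _ (hgmem p) _ (hgmem q) i i' ?_
    intro hcontra
    exact hgqne p q hpq (congrArg Prod.fst hcontra)
  have hmemS : ∀ (p : Fin 7) (z : X), z ∈ M → gq p • z ∈ S p :=
    fun p z hz => Set.smul_mem_smul_set hz
  clear_value M
  clear hM_def
  -- uniform separation of the seven sets
  have hsep : ∀ pq : Fin 7 × Fin 7, ∃ d : ℝ, 0 < d ∧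
      (pq.1 ≠ pq.2 → ∀ w ∈ S pq.2, d ≤ infDist w (S pq.1)) := by
    rintro ⟨p, q⟩
    by_cases hpq : p = q
    · exact ⟨1, one_pos, fun h => absurd hpq h⟩
    · obtain ⟨d, hd, hdisj⟩ :=
        (hSdisj p q hpq).exists_thickenings (hScomp p) (hSclosed q)
      refine ⟨d, hd, fun _ w hw => ?_⟩
      have hw2 : w ∈ thickening d (S q) := self_subset_thickening hd _ hw
      by_contra hlt
      push_neg at hlt
      obtain ⟨z, hz, hzd⟩ := (infDist_lt_iff (hSne p)).mp hlt
      exact Set.disjoint_left.mp hdisj (mem_thickening_iff.mpr ⟨z, hz, hzd⟩) hw2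
  choose δf hδ0 hδle using hsep
  set δ : ℝ := Finset.univ.inf' ⟨((0 : Fin 7), (0 : Fin 7)), Finset.mem_univ _⟩ δf with hδ_def
  have hδpos : 0 < δ := (Finset.lt_inf'_iff _).mpr fun pq _ => hδ0 pq
  have hδle' : ∀ p q : Fin 7, p ≠ q → ∀ w ∈ S q, δ ≤ infDist w (S p) := by
    intro p q hpq w hw
    exact le_trans (Finset.inf'_le _ (Finset.mem_univ (p, q))) (hδle (p, q) hpq w hw)
  clear_value δ
  clear hδ_def hδle hδ0
  -- bump functions
  set B : Fin 7 → X → ℝ := fun p w => max 0 (1 - δ⁻¹ * infDist w (S p)) with hB_def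
  have hBcont : ∀ p, Continuous (B p) := fun p =>
    continuous_const.max (continuous_const.sub (continuous_const.mul (continuous_infDist_pt _)))
  have hB0 : ∀ p w, 0 ≤ B p w := fun p w => le_max_left _ _
  have hB1 : ∀ p w, B p w ≤ 1 := by
    intro p w
    have h1 : 0 ≤ δ⁻¹ * infDist w (S p) :=
      mul_nonneg (inv_nonneg.mpr hδpos.le) infDist_nonneg
    exact max_le (by norm_num) (by linarith)
  have hBmem : ∀ p w, w ∈ S p → B p w = 1 := by
    intro p w hw
    simp [hB_def, infDist_zero_of_mem hw]
  have hBoff : ∀ p q (w : X), p ≠ q → w ∈ S q → B p w = 0 := by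
    intro p q w hpq hw
    have h1 : δ ≤ infDist w (S p) := hδle' p q hpq w hw
    have h2 : (1 : ℝ) ≤ δ⁻¹ * infDist w (S p) := by
      have := mul_le_mul_of_nonneg_left h1 (inv_nonneg.mpr hδpos.le)
      rwa [inv_mul_cancel₀ hδpos.ne'] at this
    simp only [hB_def]
    exact max_eq_left (by linarith)
  have hSopaque : True := trivial
  clear_value S
  clear hS_def
  have hBone_mem : ∀ w, B 0 w = 1 → w ∈ M := by
    intro w hw
    have hd0 : infDist w (S 0) ≤ 0 := by
      by_contra hpos
      push_neg at hpos
      have hlt : δ⁻¹ * infDist w (S 0) > 0 := mul_pos (inv_pos.mpr hδpos) hpos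
      have : B 0 w < 1 := by
        simp only [hB_def]
        exact max_lt (by norm_num) (by linarith)
      rw [hw] at this
      exact lt_irrefl _ this
    have hd : infDist w (S 0) = 0 := le_antisymm hd0 infDist_nonneg
    have : w ∈ S 0 := ((hSclosed 0).mem_iff_infDist_zero (hSne 0)).mpr hd
    rwa [hS0] at this
  clear_value B
  clear hB_def
  -- content rows
  obtain ⟨cont, dpos, spos, hccont, hcont0, hcontpos, hconthalf, hcontd, hconts, hcontlip⟩ :
      ∃ (cont : ℕ → C(X, ℝ) → Fin 7 → X → ℝ) (dpos spos : Fin 3 → Fin 7),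
        (∀ m (H : C(X, ℝ)) p, Continuous (cont m H p)) ∧
        (∀ m (H : C(X, ℝ)) (w : X), cont m H 0 w = 1) ∧
        (∀ m (H : C(X, ℝ)), (∀ x, 0 ≤ H x ∧ H x ≤ 1) → ∀ p w, 0 ≤ cont m H p w) ∧
        (∀ m (H : C(X, ℝ)), (∀ x, 0 ≤ H x ∧ H x ≤ 1) → ∀ p, p ≠ 0 → ∀ w,
          cont m H p w ≤ 2⁻¹) ∧
        (∀ m (H : C(X, ℝ)) (i : Fin 3) (w : X),
          cont m H (dpos i) w = 4⁻¹ + fm m (c i • ((gq (dpos i))⁻¹ • w)) * 4⁻¹) ∧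
        (∀ m (H : C(X, ℝ)) (i : Fin 3) (w : X),
          cont m H (spos i) w = 4⁻¹ + H (c i • ((gq (spos i))⁻¹ • w)) * 4⁻¹) ∧
        (∀ m (H H' : C(X, ℝ)) p w, |cont m H p w - cont m H' p w| ≤ 4⁻¹ * dist H H') := by
    refine ⟨fun m H =>
      ![fun _ => 1,
        fun w => 4⁻¹ + fm m (c 0 • ((gq 1)⁻¹ • w)) * 4⁻¹,
        fun w => 4⁻¹ + fm m (c 1 • ((gq 2)⁻¹ • w)) * 4⁻¹,
        fun w => 4⁻¹ + fm m (c 2 • ((gq 3)⁻¹ • w)) * 4⁻¹,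
        fun w => 4⁻¹ + H (c 0 • ((gq 4)⁻¹ • w)) * 4⁻¹,
        fun w => 4⁻¹ + H (c 1 • ((gq 5)⁻¹ • w)) * 4⁻¹,
        fun w => 4⁻¹ + H (c 2 • ((gq 6)⁻¹ • w)) * 4⁻¹],
      ![1, 2, 3], ![4, 5, 6], ?_, ?_, ?_, ?_, ?_, ?_, ?_⟩
    · intro m H p
      fin_cases p
      · exact continuous_const
      · exact continuous_const.add
          (((hfmc m).comp ((continuous_const_smul _).comp (continuous_const_smul _))).mul
            continuous_const)
      · exact continuous_const.add
          (((hfmc m).comp ((continuous_const_smul _).comp (continuous_const_smul _))).mul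
            continuous_const)
      · exact continuous_const.add
          (((hfmc m).comp ((continuous_const_smul _).comp (continuous_const_smul _))).mul
            continuous_const)
      · exact continuous_const.add
          ((H.continuous.comp ((continuous_const_smul _).comp (continuous_const_smul _))).mul
            continuous_const)
      · exact continuous_const.add
          ((H.continuous.comp ((continuous_const_smul _).comp (continuous_const_smul _))).mul
            continuous_const)
      · exact continuous_const.add
          ((H.continuous.comp ((continuous_const_smul _).comp (continuous_const_smul _))).mul
            continuous_const)
    · intro m H w; rfl
    · intro m H hH p w
      fin_cases p
      · norm_num
      · have := hfm0 m (c 0 • ((gq 1)⁻¹ • w)); simp only []; norm_num; linarith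
      · have := hfm0 m (c 1 • ((gq 2)⁻¹ • w)); simp only []; norm_num; linarith
      · have := hfm0 m (c 2 • ((gq 3)⁻¹ • w)); simp only []; norm_num; linarith
      · have := (hH (c 0 • ((gq 4)⁻¹ • w))).1; simp only []; norm_num; linarith
      · have := (hH (c 1 • ((gq 5)⁻¹ • w))).1; simp only []; norm_num; linarith
      · have := (hH (c 2 • ((gq 6)⁻¹ • w))).1; simp only []; norm_num; linarith
    · intro m H hH p hp w
      fin_cases p
      · exact absurd rfl hp
      · have := hfm1 m (c 0 • ((gq 1)⁻¹ • w)); show 4⁻¹ + _ * 4⁻¹ ≤ 2⁻¹; linarith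
      · have := hfm1 m (c 1 • ((gq 2)⁻¹ • w)); show 4⁻¹ + _ * 4⁻¹ ≤ 2⁻¹; linarith
      · have := hfm1 m (c 2 • ((gq 3)⁻¹ • w)); show 4⁻¹ + _ * 4⁻¹ ≤ 2⁻¹; linarith
      · have := (hH (c 0 • ((gq 4)⁻¹ • w))).2; show 4⁻¹ + _ * 4⁻¹ ≤ 2⁻¹; linarith
      · have := (hH (c 1 • ((gq 5)⁻¹ • w))).2; show 4⁻¹ + _ * 4⁻¹ ≤ 2⁻¹; linarith
      · have := (hH (c 2 • ((gq 6)⁻¹ • w))).2; show 4⁻¹ + _ * 4⁻¹ ≤ 2⁻¹; linarith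
    · intro m H i w; fin_cases i <;> rfl
    · intro m H i w; fin_cases i <;> rfl
    · intro m H H' p w
      fin_cases p
      · show |(1:ℝ) - (1:ℝ)| ≤ 4⁻¹ * dist H H'
        simp only [sub_self, abs_zero]
        exact mul_nonneg (by norm_num : (0:ℝ) ≤ 4⁻¹) dist_nonneg
      · show |(4⁻¹ + fm m (c 0 • ((gq 1)⁻¹ • w)) * 4⁻¹)
            - (4⁻¹ + fm m (c 0 • ((gq 1)⁻¹ • w)) * 4⁻¹)| ≤ 4⁻¹ * dist H H'
        simp only [sub_self, abs_zero]
        exact mul_nonneg (by norm_num : (0:ℝ) ≤ 4⁻¹) dist_nonneg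
      · show |(4⁻¹ + fm m (c 1 • ((gq 2)⁻¹ • w)) * 4⁻¹)
            - (4⁻¹ + fm m (c 1 • ((gq 2)⁻¹ • w)) * 4⁻¹)| ≤ 4⁻¹ * dist H H'
        simp only [sub_self, abs_zero]
        exact mul_nonneg (by norm_num : (0:ℝ) ≤ 4⁻¹) dist_nonneg
      · show |(4⁻¹ + fm m (c 2 • ((gq 3)⁻¹ • w)) * 4⁻¹)
            - (4⁻¹ + fm m (c 2 • ((gq 3)⁻¹ • w)) * 4⁻¹)| ≤ 4⁻¹ * dist H H'
        simp only [sub_self, abs_zero]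
        exact mul_nonneg (by norm_num : (0:ℝ) ≤ 4⁻¹) dist_nonneg
      · show |(4⁻¹ + H (c 0 • ((gq 4)⁻¹ • w)) * 4⁻¹) - (4⁻¹ + H' (c 0 • ((gq 4)⁻¹ • w)) * 4⁻¹)| ≤ _
        have h := ContinuousMap.dist_apply_le_dist (f := H) (g := H') (c 0 • ((gq 4)⁻¹ • w))
        rw [Real.dist_eq] at h
        have he : (4⁻¹ + H (c 0 • ((gq 4)⁻¹ • w)) * 4⁻¹) - (4⁻¹ + H' (c 0 • ((gq 4)⁻¹ • w)) * 4⁻¹)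
            = (H (c 0 • ((gq 4)⁻¹ • w)) - H' (c 0 • ((gq 4)⁻¹ • w))) * 4⁻¹ := by ring
        rw [he, abs_mul, abs_of_nonneg (by norm_num : (0:ℝ) ≤ 4⁻¹), mul_comm]
        exact mul_le_mul_of_nonneg_left h (by norm_num)
      · show |(4⁻¹ + H (c 1 • ((gq 5)⁻¹ • w)) * 4⁻¹) - (4⁻¹ + H' (c 1 • ((gq 5)⁻¹ • w)) * 4⁻¹)| ≤ _
        have h := ContinuousMap.dist_apply_le_dist (f := H) (g := H') (c 1 • ((gq 5)⁻¹ • w))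
        rw [Real.dist_eq] at h
        have he : (4⁻¹ + H (c 1 • ((gq 5)⁻¹ • w)) * 4⁻¹) - (4⁻¹ + H' (c 1 • ((gq 5)⁻¹ • w)) * 4⁻¹)
            = (H (c 1 • ((gq 5)⁻¹ • w)) - H' (c 1 • ((gq 5)⁻¹ • w))) * 4⁻¹ := by ring
        rw [he, abs_mul, abs_of_nonneg (by norm_num : (0:ℝ) ≤ 4⁻¹), mul_comm]
        exact mul_le_mul_of_nonneg_left h (by norm_num)
      · show |(4⁻¹ + H (c 2 • ((gq 6)⁻¹ • w)) * 4⁻¹) - (4⁻¹ + H' (c 2 • ((gq 6)⁻¹ • w)) * 4⁻¹)| ≤ _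
        have h := ContinuousMap.dist_apply_le_dist (f := H) (g := H') (c 2 • ((gq 6)⁻¹ • w))
        rw [Real.dist_eq] at h
        have he : (4⁻¹ + H (c 2 • ((gq 6)⁻¹ • w)) * 4⁻¹) - (4⁻¹ + H' (c 2 • ((gq 6)⁻¹ • w)) * 4⁻¹)
            = (H (c 2 • ((gq 6)⁻¹ • w)) - H' (c 2 • ((gq 6)⁻¹ • w))) * 4⁻¹ := by ring
        rw [he, abs_mul, abs_of_nonneg (by norm_num : (0:ℝ) ≤ 4⁻¹), mul_comm]
        exact mul_le_mul_of_nonneg_left h (by norm_num)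
  -- the stage operator
  have hTcont : ∀ m (H : C(X, ℝ)), Continuous fun w =>
      (Finset.univ : Finset (Fin 7)).sup' ⟨0, Finset.mem_univ 0⟩
        (fun p => min (cont m H p w) (B p w)) := by
    intro m H
    exact continuous_finset_sup'_aux _ _ _ fun p => (hccont m H p).min (hBcont p)
  set T : ℕ → C(X, ℝ) → C(X, ℝ) := fun m H => ⟨_, hTcont m H⟩ with hT_def
  have hTapp : ∀ m (H : C(X, ℝ)) (w : X), T m H w =
      (Finset.univ : Finset (Fin 7)).sup' ⟨0, Finset.mem_univ 0⟩
        (fun p => min (cont m H p w) (B p w)) := fun m H w => rfl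
  have hread : ∀ m (H : C(X, ℝ)), (∀ x, 0 ≤ H x ∧ H x ≤ 1) → ∀ p (w : X), w ∈ S p →
      T m H w = cont m H p w := by
    intro m H hH p w hw
    rw [hTapp]
    have hle1 : cont m H p w ≤ 1 := by
      rcases eq_or_ne p 0 with rfl | hp
      · rw [hcont0]
      · exact le_trans (hconthalf m H hH p hp w) (by norm_num)
    apply le_antisymm
    · refine Finset.sup'_le _ _ fun q _ => ?_
      rcases eq_or_ne q p with rfl | hqp
      · exact min_le_left _ _
      · refine le_trans (min_le_right _ _) ?_
        rw [hBoff q p w hqp hw]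
        exact hcontpos m H hH p w
    · have h1 : min (cont m H p w) (B p w) = cont m H p w := by
        rw [hBmem p w hw]
        exact min_eq_left hle1
      exact h1 ▸ Finset.le_sup' (fun q => min (cont m H q w) (B q w)) (Finset.mem_univ p)
  have hTrange : ∀ m (H : C(X, ℝ)) (w : X), 0 ≤ T m H w ∧ T m H w ≤ 1 := by
    intro m H w
    rw [hTapp]
    constructor
    · refine le_trans ?_
        (Finset.le_sup' (fun q => min (cont m H q w) (B q w)) (Finset.mem_univ (0 : Fin 7)))
      rw [hcont0]
      exact le_min (by norm_num) (hB0 0 w)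
    · exact Finset.sup'_le _ _ fun q _ => le_trans (min_le_right _ _) (hB1 q w)
  have hT1 : ∀ m (H : C(X, ℝ)), (∀ x, 0 ≤ H x ∧ H x ≤ 1) → ∀ w ∈ M, T m H w = 1 := by
    intro m H hH w hw
    rw [hread m H hH 0 w (hS0.symm ▸ hw), hcont0]
  have hT1b : ∀ m (H : C(X, ℝ)), (∀ x, 0 ≤ H x ∧ H x ≤ 1) → ∀ w, T m H w = 1 → w ∈ M := by
    intro m H hH w hw
    rw [hTapp] at hw
    obtain ⟨p, _, hp⟩ := Finset.exists_mem_eq_sup'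
      (⟨(0 : Fin 7), Finset.mem_univ 0⟩ : (Finset.univ : Finset (Fin 7)).Nonempty)
      (fun p => min (cont m H p w) (B p w))
    rw [hp] at hw
    have h1 : (1 : ℝ) ≤ cont m H p w := hw ▸ min_le_left _ _
    have h2 : (1 : ℝ) ≤ B p w := hw ▸ min_le_right _ _
    rcases eq_or_ne p 0 with rfl | hp0
    · exact hBone_mem w (le_antisymm (hB1 0 w) h2)
    · have := hconthalf m H hH p hp0 w
      linarith
  have hTlip : ∀ m (H H' : C(X, ℝ)), dist (T m H) (T m H') ≤ 4⁻¹ * dist H H' := by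
    intro m H H'
    rw [ContinuousMap.dist_le (mul_nonneg (by norm_num : (0:ℝ) ≤ 4⁻¹) dist_nonneg)]
    intro w
    rw [Real.dist_eq]
    have key : ∀ (H₁ H₂ : C(X, ℝ)), T m H₁ w ≤ T m H₂ w + 4⁻¹ * dist H₁ H₂ := by
      intro H₁ H₂
      rw [hTapp, hTapp]
      refine Finset.sup'_le _ _ fun q _ => ?_
      have hc : cont m H₁ q w ≤ cont m H₂ q w + 4⁻¹ * dist H₁ H₂ := by
        have := hcontlip m H₁ H₂ q w
        have h2 := abs_sub_le_iff.mp this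
        linarith [h2.1]
      have h3 : min (cont m H₁ q w) (B q w)
          ≤ min (cont m H₂ q w + 4⁻¹ * dist H₁ H₂) (B q w + 4⁻¹ * dist H₁ H₂) := by
        refine min_le_min hc ?_
        have : (0:ℝ) ≤ 4⁻¹ * dist H₁ H₂ := by positivity
        linarith
      rw [min_add_add_right] at h3
      refine le_trans h3 ?_
      have h4 := Finset.le_sup' (f := fun p => min (cont m H₂ p w) (B p w))
        (Finset.mem_univ q)
      exact (add_le_add_iff_right _).mpr h4
    have k1 := key H H'
    have k2 := key H' H
    rw [dist_comm H' H] at k2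
    rw [abs_sub_le_iff]
    constructor <;> linarith
  clear_value T
  clear hT_def
  -- the inverse-limit sequence
  set Φ : ℕ → ℕ → C(X, ℝ) := fun k =>
    Nat.rec (motive := fun _ => ℕ → C(X, ℝ)) (fun _ => ContinuousMap.const X 0)
      (fun _ ih m => T m (ih (m + 1))) k with hΦ_def
  have hΦ0 : ∀ m, Φ 0 m = ContinuousMap.const X 0 := fun _ => rfl
  have hΦs : ∀ k m, Φ (k + 1) m = T m (Φ k (m + 1)) := fun _ _ => rfl
  have hΦgood : ∀ k m (x : X), 0 ≤ Φ k m x ∧ Φ k m x ≤ 1 := by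
    intro k
    induction k with
    | zero => intro m x; rw [hΦ0]; simp
    | succ k _ => intro m x; rw [hΦs]; exact hTrange m _ x
  have hdist : ∀ k m, dist (Φ (k + 1) m) (Φ k m) ≤ (4⁻¹ : ℝ) ^ k := by
    intro k
    induction k with
    | zero =>
      intro m
      rw [pow_zero, ContinuousMap.dist_le zero_le_one]
      intro x
      have h1 := hTrange m (Φ 0 (m + 1)) x
      rw [hΦ0 m, hΦs 0 m, Real.dist_eq, ContinuousMap.const_apply, sub_zero,
        abs_of_nonneg h1.1]
      exact h1.2
    | succ k ih =>
      intro m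
      rw [hΦs (k + 1) m, hΦs k m]
      refine le_trans (hTlip m _ _) ?_
      have := ih (m + 1)
      rw [pow_succ]
      rw [mul_comm ((4:ℝ)⁻¹ ^ k) 4⁻¹]
      exact mul_le_mul_of_nonneg_left this (by norm_num)
  have hlim : ∀ m, ∃ L, Tendsto (fun k => Φ k m) atTop (nhds L) := by
    intro m
    apply cauchySeq_tendsto_of_complete
    refine cauchySeq_of_le_geometric 4⁻¹ 1 (by norm_num) fun n => ?_
    rw [dist_comm, one_mul]
    exact hdist n m
  choose F hF using hlim
  have hTlipW : ∀ m, LipschitzWith 4⁻¹ (T m) := by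
    intro m
    refine LipschitzWith.of_dist_le_mul fun H H' => ?_
    refine le_trans (hTlip m H H') ?_
    apply mul_le_mul_of_nonneg_right _ dist_nonneg
    norm_num
  have hfix : ∀ m, F m = T m (F (m + 1)) := by
    intro m
    have h1 : Tendsto (fun k => Φ (k + 1) m) atTop (nhds (F m)) :=
      (hF m).comp (tendsto_add_atTop_nat 1)
    have h2 : Tendsto (fun k => T m (Φ k (m + 1))) atTop (nhds (T m (F (m + 1)))) :=
      (((hTlipW m).continuous).tendsto _).comp (hF (m + 1))
    have h3 : (fun k => Φ (k + 1) m) = fun k => T m (Φ k (m + 1)) :=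
      funext fun k => hΦs k m
    exact tendsto_nhds_unique (h3 ▸ h1) h2
  have hFgood : ∀ m (x : X), 0 ≤ F m x ∧ F m x ≤ 1 := by
    intro m x
    have hev : Tendsto (fun k => Φ k m x) atTop (nhds (F m x)) :=
      ((continuous_eval_const x).tendsto _).comp (hF m)
    constructor
    · exact ge_of_tendsto' hev fun k => (hΦgood k m x).1
    · exact le_of_tendsto' hev fun k => (hΦgood k m x).2
  -- decoding
  have hkey : ∀ m (x y : X), (∀ h : G, F m (h • x) = F m (h • y)) →
      fm m x = fm m y ∧ ∀ h : G, F (m + 1) (h • x) = F (m + 1) (h • y) := by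
    intro m x y hb
    constructor
    · obtain ⟨i, hzx⟩ := hcov_pt x
      have hzyM : (c i)⁻¹ • y ∈ M := by
        apply hT1b m (F (m + 1)) (hFgood (m + 1))
        rw [← hfix m]
        have h1 := hb (c i)⁻¹
        rw [← h1]
        rw [hfix m]
        exact hT1 m (F (m + 1)) (hFgood (m + 1)) _ hzx
      have hrx : F m (gq (dpos i) • ((c i)⁻¹ • x)) = 4⁻¹ + fm m x * 4⁻¹ := by
        rw [hfix m, hread m (F (m + 1)) (hFgood (m + 1)) (dpos i) _ (hmemS (dpos i) _ hzx),
          hcontd, inv_smul_smul, smul_inv_smul]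
      have hry : F m (gq (dpos i) • ((c i)⁻¹ • y)) = 4⁻¹ + fm m y * 4⁻¹ := by
        rw [hfix m, hread m (F (m + 1)) (hFgood (m + 1)) (dpos i) _ (hmemS (dpos i) _ hzyM),
          hcontd, inv_smul_smul, smul_inv_smul]
      have hbb := hb (gq (dpos i) * (c i)⁻¹)
      simp only [mul_smul] at hbb
      rw [hrx, hry] at hbb
      linarith
    · intro h
      obtain ⟨i, hzx⟩ := hcov_pt (h • x)
      have hzyM : (c i)⁻¹ • (h • y) ∈ M := by
        apply hT1b m (F (m + 1)) (hFgood (m + 1))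
        rw [← hfix m]
        have h1 := hb ((c i)⁻¹ * h)
        simp only [mul_smul] at h1
        rw [← h1]
        rw [hfix m]
        exact hT1 m (F (m + 1)) (hFgood (m + 1)) _ hzx
      have hrx : F m (gq (spos i) • ((c i)⁻¹ • (h • x)))
          = 4⁻¹ + F (m + 1) (h • x) * 4⁻¹ := by
        rw [hfix m, hread m (F (m + 1)) (hFgood (m + 1)) (spos i) _ (hmemS (spos i) _ hzx),
          hconts, inv_smul_smul, smul_inv_smul]
      have hry : F m (gq (spos i) • ((c i)⁻¹ • (h • y)))
          = 4⁻¹ + F (m + 1) (h • y) * 4⁻¹ := by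
        rw [hfix m, hread m (F (m + 1)) (hFgood (m + 1)) (spos i) _ (hmemS (spos i) _ hzyM),
          hconts, inv_smul_smul, smul_inv_smul]
      have hbb := hb (gq (spos i) * ((c i)⁻¹ * h))
      simp only [mul_smul] at hbb
      rw [hrx, hry] at hbb
      linarith
  have hsepF : ∀ x y : X, (∀ h : G, F 0 (h • x) = F 0 (h • y)) → x = y := by
    intro x y hb
    have hall : ∀ m, ∀ h : G, F m (h • x) = F m (h • y) := by
      intro m
      induction m with
      | zero => exact hb
      | succ n ih => exact (hkey n x y ih).2
    exact hfmsep x y fun m => (hkey m x y (hall m)).1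
  -- final assembly
  refine ⟨fun x g => F 0 (g⁻¹ • x), ?_, ?_, ?_⟩
  · intro x g
    exact Set.mem_Icc.mpr ⟨(hFgood 0 _).1, (hFgood 0 _).2⟩
  · have hc : Continuous fun x : X => fun g : G => F 0 (g⁻¹ • x) :=
      continuous_pi fun g => (F 0).continuous.comp (continuous_const_smul _)
    have hi : Function.Injective fun x : X => fun g : G => F 0 (g⁻¹ • x) := by
      intro x y hxy
      refine hsepF x y fun h => ?_
      have := congrFun hxy h⁻¹
      simpa [inv_inv] using this
    exact (hc.isClosedEmbedding hi).isEmbedding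
  · intro g x
    funext h
    show F 0 (h⁻¹ • (g • x)) = F 0 ((g⁻¹ * h)⁻¹ • x)
    rw [mul_inv_rev, inv_inv, mul_smul]
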